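/- (Quartic ODE for the normal extremal control.) Let α, β, γ ∈ ℝ and let u_A, u_B, u_C : ℝ → ℝ be differentiable functions satisfying u_A′ = u_B·u_C, u_B′ = −u_C, and u_C′ = α·u_A − β·u_B + γ·u_A·u_B − α·u_B². Set c₁ := u_A(0) + (1/2)·u_B(0)² and c₂ := (γ/2)·u_A(0)² − α·u_A(0)·u_B(0) − (1/2)·u_C(0)² − β·u_A(0). Then the function u := u_B satisfies, for all t, (u′(t))² = (γ/4)·u(t)⁴ + α·u(t)³ + (β − γc₁)·u(t)² − 2αc₁·u(t) + γc₁² − 2βc₁ − 2c₂. -/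

import Mathlib

theorem stmt9 (α β γ : ℝ) (uA uB uC : ℝ → ℝ)
    (hA : ∀ t, HasDerivAt uA (uB t * uC t) t)
    (hB : ∀ t, HasDerivAt uB (-uC t) t)
    (hC : ∀ t, HasDerivAt uC
      (α * uA t - β * uB t + γ * uA t * uB t - α * (uB t) ^ 2) t)
    (c₁ c₂ : ℝ)
    (hc₁ : c₁ = uA 0 + (1 / 2) * (uB 0) ^ 2)
    (hc₂ : c₂ = (γ / 2) * (uA 0) ^ 2 - α * uA 0 * uB 0 - (1 / 2) * (uC 0) ^ 2 - β * uA 0) :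
    ∀ t : ℝ, (deriv uB t) ^ 2
      = (γ / 4) * (uB t) ^ 4 + α * (uB t) ^ 3 + (β - γ * c₁) * (uB t) ^ 2
        - 2 * α * c₁ * uB t + γ * c₁ ^ 2 - 2 * β * c₁ - 2 * c₂ := by
  intro t
  set f : ℝ → ℝ := fun t => uA t + (1 / 2) * (uB t) ^ 2 with hf
  set g : ℝ → ℝ := fun t =>
    (γ / 2) * (uA t) ^ 2 - α * uA t * uB t - (1 / 2) * (uC t) ^ 2 - β * uA t with hg
  have hf' : ∀ s, HasDerivAt f 0 s := by
    intro s
    have := (hA s).add ((((hB s).pow 2)).const_mul (1 / 2 : ℝ))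
    refine this.congr_deriv ?_
    ring
  have hg' : ∀ s, HasDerivAt g 0 s := by
    intro s
    have := (((((hA s).pow 2).const_mul (γ / 2 : ℝ)).sub
      ((((hA s).const_mul α).mul (hB s)))).sub
      (((hC s).pow 2).const_mul (1 / 2 : ℝ))).sub ((hA s).const_mul β)
    refine this.congr_deriv ?_
    ring
  have hfc : f t = f 0 :=
    is_const_of_deriv_eq_zero (fun s => (hf' s).differentiableAt)
      (fun s => (hf' s).deriv) t 0
  have hgc : g t = g 0 :=
    is_const_of_deriv_eq_zero (fun s => (hg' s).differentiableAt)
      (fun s => (hg' s).deriv) t 0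
  have hdB : deriv uB t = -uC t := (hB t).deriv
  have h1 : uA t + (1 / 2) * (uB t) ^ 2 = c₁ := by
    have := hfc; simp only [hf] at this; rw [hc₁]; exact this
  have h2 : (γ / 2) * (uA t) ^ 2 - α * uA t * uB t - (1 / 2) * (uC t) ^ 2 - β * uA t = c₂ := by
    have := hgc; simp only [hg] at this; rw [hc₂]; exact this
  have hAeq : uA t = c₁ - (1 / 2) * (uB t) ^ 2 := by linarith
  rw [hdB]
  have hC2 : (uC t) ^ 2 = γ * (uA t) ^ 2 - 2 * α * uA t * uB t - 2 * β * uA t - 2 * c₂ := by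
    linarith
  rw [neg_sq, hC2, hAeq]
  ring
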